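/- Let V be a finite-dimensional vector space over a field K and ρ : V ⊗ V → V ⊗ V an invertible solution of the Yang–Baxter equation such that the partial transpose ρ^{t₁} (transpose in the first tensor factor, a map V* ⊗ V → V ⊗ V* after appropriate identification) of both ρ and ρ⁻¹ is invertible. Then V* ≅ V-dual on both sides via the modified evaluation and coevaluation: setting ρ± to be the partial transposes of ρ^{±1}, the maps η̄ = ρ₋⁻¹ ∘ coev : K → V ⊗ V* and ε̄ = eval ∘ ρ₊⁻¹ : V* ⊗ V → K satisfy the zig-zag identities (id_V ⊗ ε̄) ∘ (η̄ ⊗ id_V) = id_V and (ε̄ ⊗ id_{V*}) ∘ (id_{V*} ⊗ η̄) = id_{V*}. -/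

import Mathlib

open TensorProduct

namespace Stmt11

variable {K V : Type*} [Field K] [AddCommGroup V] [Module K V] [FiniteDimensional K V]

/-- The canonical coevaluation `K → V* ⊗ V`, `1 ↦ Σ wⁱ ⊗ v_i`. -/
noncomputable def coevV : K →ₗ[K] Module.Dual K V ⊗[K] V :=
  (TensorProduct.comm K V (Module.Dual K V)).toLinearMap ∘ₗ coevaluation K V

/-- The partial transpose `l_p` (in the first tensor factor) of a linear map
`f : V ⊗ U → W ⊗ V`, with respect to the canonical duality `p = ⟨V, V*, coev, eval⟩`;
it is the composition `a_p ∘ b_p⁻¹`, a map `U ⊗ V* → V* ⊗ W`. -/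
noncomputable def lp {U W : Type*} [AddCommGroup U] [Module K U]
    [AddCommGroup W] [Module K W] (f : V ⊗[K] U →ₗ[K] W ⊗[K] V) :
    U ⊗[K] Module.Dual K V →ₗ[K] Module.Dual K V ⊗[K] W :=
  LinearMap.lTensor (Module.Dual K V)
      ((TensorProduct.rid K W).toLinearMap ∘ₗ
        LinearMap.lTensor W (contractRight K V) ∘ₗ
          (TensorProduct.assoc K W V (Module.Dual K V)).toLinearMap ∘ₗ
            LinearMap.rTensor (Module.Dual K V) f ∘ₗ
              (TensorProduct.assoc K V U (Module.Dual K V)).symm.toLinearMap) ∘ₗ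
    (TensorProduct.assoc K (Module.Dual K V) V
        (U ⊗[K] Module.Dual K V)).toLinearMap ∘ₗ
      LinearMap.rTensor (U ⊗[K] Module.Dual K V) (coevV (K := K) (V := V)) ∘ₗ
        (TensorProduct.lid K (U ⊗[K] Module.Dual K V)).symm.toLinearMap

/-- `f ⊗ id` on `(V ⊗ V) ⊗ V`. -/
noncomputable def Y1 (f : V ⊗[K] V →ₗ[K] V ⊗[K] V) :
    (V ⊗[K] V) ⊗[K] V →ₗ[K] (V ⊗[K] V) ⊗[K] V := LinearMap.rTensor V f

/-- `id ⊗ f` on `(V ⊗ V) ⊗ V`. -/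
noncomputable def Y2 (f : V ⊗[K] V →ₗ[K] V ⊗[K] V) :
    (V ⊗[K] V) ⊗[K] V →ₗ[K] (V ⊗[K] V) ⊗[K] V :=
  (TensorProduct.assoc K V V V).symm.toLinearMap ∘ₗ LinearMap.lTensor V f ∘ₗ
    (TensorProduct.assoc K V V V).toLinearMap

/-! ### Auxiliary machinery for the proof of Statement 11 -/

section Aux

set_option linter.unusedSectionVars false
set_option synthInstance.maxHeartbeats 1000000
set_option maxHeartbeats 4000000

variable {ι : Type*} [Fintype ι] [DecidableEq ι]

/-- Kronecker delta. -/
def Kd [Field K] (i j : ι) : K := if i = j then 1 else 0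

lemma sum_kd_mul [Field K] (c : ι) (f : ι → K) : (∑ x, Kd x c * f x) = f c := by
  simp [Kd, ite_mul]

lemma sum_kd_mul' [Field K] (c : ι) (f : ι → K) : (∑ x, Kd c x * f x) = f c := by
  simp [Kd, ite_mul]

lemma sum_mul_kd [Field K] (c : ι) (f : ι → K) : (∑ x, f x * Kd x c) = f c := by
  simp [Kd, mul_ite]

lemma sum_mul_kd' [Field K] (c : ι) (f : ι → K) : (∑ x, f x * Kd c x) = f c := by
  simp [Kd, mul_ite]

lemma kd_comm [Field K] (i j : ι) : (Kd i j : K) = Kd j i := by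
  simp [Kd, eq_comm]

lemma sum_kd_smul {M : Type*} [AddCommGroup M] [Module K M] (c : ι) (v : ι → M) :
    (∑ x, (Kd x c : K) • v x) = v c := by
  rw [Finset.sum_eq_single c]
  · simp [Kd]
  · intro x _ hx; simp [Kd, hx]
  · intro h; exact absurd (Finset.mem_univ c) h

lemma sum_kd_smul' {M : Type*} [AddCommGroup M] [Module K M] (c : ι) (v : ι → M) :
    (∑ x, (Kd c x : K) • v x) = v c := by
  rw [Finset.sum_eq_single c]
  · simp [Kd]
  · intro x _ hx; simp [Kd, Ne.symm hx]
  · intro h; exact absurd (Finset.mem_univ c) h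

lemma collapse2 (f : ι → ι → K) (a c : ι) :
    (∑ i, ∑ k, f i k * (Kd a i * Kd k c)) = f a c := by
  simp [Kd, mul_ite, ite_mul]

lemma collapse2' (f : ι → ι → K) (a c : ι) :
    (∑ i, ∑ k, f i k * (Kd i a * Kd c k)) = f a c := by
  simp [Kd, mul_ite, ite_mul]

lemma collapse5 (g : ι → K) (f : ι → ι → K) (p q m' : ι) :
    (∑ m'', g m'' * (∑ p', ∑ q', f p' q' * ((Kd p' p * Kd q' q) * Kd m'' m')))
      = g m' * f p q := by
  simp [Kd, mul_ite, ite_mul, Finset.mul_sum]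

lemma collapse6 (f : ι → ι → K) (q m' : ι) (c : K) :
    (∑ q', ∑ m'', f q' m'' * ((c * Kd q' q) * Kd m'' m')) = c * f q m' := by
  simp [Kd, mul_ite, ite_mul]
  ring

lemma collapse7 (f : ι → ι → K) (g : ι → K) (p : ι) :
    (∑ p', ∑ μ, f p' μ * (Kd p' p * g μ)) = ∑ μ, f p μ * g μ := by
  simp [Kd, mul_ite, ite_mul]

lemma rot1_3 (f : ι → ι → ι → ι → K) :
    (∑ x, ∑ c, ∑ d, ∑ e, f x c d e) = ∑ c, ∑ d, ∑ e, ∑ x, f x c d e := by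
  rw [Finset.sum_comm]
  refine Finset.sum_congr rfl fun c _ => ?_
  rw [Finset.sum_comm]
  refine Finset.sum_congr rfl fun d _ => ?_
  exact Finset.sum_comm

lemma rot1_5 (f : ι → ι → ι → ι → ι → ι → K) :
    (∑ x, ∑ c, ∑ d, ∑ e, ∑ g, ∑ h, f x c d e g h)
      = ∑ c, ∑ d, ∑ e, ∑ g, ∑ h, ∑ x, f x c d e g h := by
  rw [Finset.sum_comm]
  refine Finset.sum_congr rfl fun c _ => ?_
  rw [Finset.sum_comm]
  refine Finset.sum_congr rfl fun d _ => ?_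
  rw [Finset.sum_comm]
  refine Finset.sum_congr rfl fun e _ => ?_
  rw [Finset.sum_comm]
  refine Finset.sum_congr rfl fun g _ => ?_
  exact Finset.sum_comm

lemma rot2_3 (f : ι → ι → ι → ι → ι → K) :
    (∑ x, ∑ y, ∑ c, ∑ d, ∑ e, f x y c d e)
      = ∑ c, ∑ d, ∑ e, ∑ x, ∑ y, f x y c d e := by
  calc (∑ x, ∑ y, ∑ c, ∑ d, ∑ e, f x y c d e)
      = ∑ x, ∑ c, ∑ d, ∑ e, ∑ y, f x y c d e :=
        Finset.sum_congr rfl fun x _ => rot1_3 (fun y c d e => f x y c d e)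
    _ = ∑ c, ∑ d, ∑ e, ∑ x, ∑ y, f x y c d e :=
        rot1_3 (fun x c d e => ∑ y, f x y c d e)

lemma rot2_5 (f : ι → ι → ι → ι → ι → ι → ι → K) :
    (∑ x, ∑ y, ∑ c, ∑ d, ∑ e, ∑ g, ∑ h, f x y c d e g h)
      = ∑ c, ∑ d, ∑ e, ∑ g, ∑ h, ∑ x, ∑ y, f x y c d e g h := by
  calc (∑ x, ∑ y, ∑ c, ∑ d, ∑ e, ∑ g, ∑ h, f x y c d e g h)
      = ∑ x, ∑ c, ∑ d, ∑ e, ∑ g, ∑ h, ∑ y, f x y c d e g h :=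
        Finset.sum_congr rfl fun x _ => rot1_5 (fun y c d e g h => f x y c d e g h)
    _ = ∑ c, ∑ d, ∑ e, ∑ g, ∑ h, ∑ x, ∑ y, f x y c d e g h :=
        rot1_5 (fun x c d e g h => ∑ y, f x y c d e g h)

/-- coordinate functional on `V ⊗ V`. -/
noncomputable def chi2 (b : Module.Basis ι K V) (k m : ι) : V ⊗[K] V →ₗ[K] K :=
  TensorProduct.lift ((b.coord k).smulRight (b.coord m))

@[simp] lemma chi2_tmul (b : Module.Basis ι K V) (k m : ι) (x y : V) :
    chi2 b k m (x ⊗ₜ[K] y) = b.coord k x * b.coord m y := by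
  simp [chi2, smul_eq_mul]

/-- coordinate functional on `V* ⊗ V`. -/
noncomputable def chid (b : Module.Basis ι K V) (i k : ι) :
    Module.Dual K V ⊗[K] V →ₗ[K] K :=
  TensorProduct.lift ((LinearMap.applyₗ (b i)).smulRight (b.coord k))

@[simp] lemma chid_tmul (b : Module.Basis ι K V) (i k : ι) (f : Module.Dual K V) (v : V) :
    chid b i k (f ⊗ₜ[K] v) = f (b i) * b.coord k v := by
  simp [chid, smul_eq_mul]

/-- coordinate functional on `V ⊗ V*`. -/
noncomputable def chih (b : Module.Basis ι K V) (j m : ι) :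
    V ⊗[K] Module.Dual K V →ₗ[K] K :=
  TensorProduct.lift ((b.coord j).smulRight (LinearMap.applyₗ (b m)))

@[simp] lemma chih_tmul (b : Module.Basis ι K V) (j m : ι) (v : V) (f : Module.Dual K V) :
    chih b j m (v ⊗ₜ[K] f) = b.coord j v * f (b m) := by
  simp [chih, smul_eq_mul]

/-- coordinate functional on `(V ⊗ V) ⊗ V`. -/
noncomputable def chi3 (b : Module.Basis ι K V) (p q m' : ι) :
    (V ⊗[K] V) ⊗[K] V →ₗ[K] K :=
  TensorProduct.lift ((chi2 b p q).smulRight (b.coord m'))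

@[simp] lemma chi3_tmul (b : Module.Basis ι K V) (p q m' : ι) (y : V ⊗[K] V) (v : V) :
    chi3 b p q m' (y ⊗ₜ[K] v) = chi2 b p q y * b.coord m' v := by
  simp [chi3, smul_eq_mul]

lemma hco (b : Module.Basis ι K V) (i j : ι) : b.coord i (b j) = (Kd j i : K) := by
  simp [Module.Basis.coord_apply, Module.Basis.repr_self, Finsupp.single_apply, Kd]

lemma expand2 (b : Module.Basis ι K V) (y : V ⊗[K] V) :
    y = ∑ k, ∑ m, chi2 b k m y • (b k ⊗ₜ[K] b m) := by
  induction y using TensorProduct.induction_on with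
  | zero => simp
  | tmul v w =>
    simp only [chi2_tmul]
    calc v ⊗ₜ[K] w = (∑ k, b.repr v k • b k) ⊗ₜ[K] (∑ m, b.repr w m • b m) := by
            rw [Module.Basis.sum_repr, Module.Basis.sum_repr]
      _ = ∑ k, ∑ m, (b.coord k v * b.coord m w) • (b k ⊗ₜ[K] b m) := by
            rw [sum_tmul]
            refine Finset.sum_congr rfl fun k _ => ?_
            rw [tmul_sum]
            refine Finset.sum_congr rfl fun m _ => ?_
            simp only [smul_tmul', tmul_smul, smul_smul, Module.Basis.coord_apply]
            rw [mul_comm]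
  | add x y hx hy =>
    conv_lhs => rw [hx, hy]
    simp only [map_add, add_smul, Finset.sum_add_distrib]

lemma dual_expand (b : Module.Basis ι K V) (f : Module.Dual K V) :
    f = ∑ m, f (b m) • b.coord m := by
  refine b.ext fun i => ?_
  simp [Module.Basis.coord_apply, Module.Basis.repr_self, Finsupp.single_apply, mul_ite]

lemma expandVD (b : Module.Basis ι K V) (y : V ⊗[K] Module.Dual K V) :
    y = ∑ j, ∑ m, chih b j m y • (b j ⊗ₜ[K] b.coord m) := by
  induction y using TensorProduct.induction_on with
  | zero => simp
  | tmul v f =>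
    simp only [chih_tmul]
    calc v ⊗ₜ[K] f = (∑ j, b.repr v j • b j) ⊗ₜ[K] (∑ m, f (b m) • b.coord m) := by
            rw [Module.Basis.sum_repr, ← dual_expand]
      _ = ∑ j, ∑ m, (b.coord j v * f (b m)) • (b j ⊗ₜ[K] b.coord m) := by
            rw [sum_tmul]
            refine Finset.sum_congr rfl fun j _ => ?_
            rw [tmul_sum]
            refine Finset.sum_congr rfl fun m _ => ?_
            simp only [smul_tmul', tmul_smul, smul_smul, Module.Basis.coord_apply]
            rw [mul_comm]
  | add x y hx hy =>
    conv_lhs => rw [hx, hy]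
    simp only [map_add, add_smul, Finset.sum_add_distrib]

/-- contraction of the second tensor factor with a functional -/
noncomputable def ctr (g : Module.Dual K V) : V ⊗[K] V →ₗ[K] V :=
  (TensorProduct.rid K V).toLinearMap ∘ₗ LinearMap.lTensor V (g : V →ₗ[K] K)

@[simp] lemma ctr_tmul (g : Module.Dual K V) (x y : V) :
    ctr g (x ⊗ₜ[K] y) = g y • x := by
  simp [ctr]

lemma coevV_one : (coevV (K := K) (V := V)) 1 =
    ∑ i, (Module.Basis.ofVectorSpace K V).coord i ⊗ₜ[K] (Module.Basis.ofVectorSpace K V) i := by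
  simp only [coevV, LinearMap.coe_comp, Function.comp_apply, LinearEquiv.coe_coe,
    coevaluation_apply_one, map_sum, comm_tmul]

lemma rid_ctr (g : Module.Dual K V) (y : V ⊗[K] V) :
    (TensorProduct.rid K V) (LinearMap.lTensor V (contractRight K V)
      ((TensorProduct.assoc K V V (Module.Dual K V)) (y ⊗ₜ[K] g))) = ctr g y := by
  induction y using TensorProduct.induction_on with
  | zero => simp
  | tmul v w => simp [contractRight_apply]
  | add x y hx hy =>
      rw [add_tmul]
      simp only [map_add, hx, hy]

lemma lp_tmul (f : V ⊗[K] V →ₗ[K] V ⊗[K] V) (x : V) (g : Module.Dual K V) :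
    lp (K := K) f (x ⊗ₜ[K] g) =
      ∑ i, (Module.Basis.ofVectorSpace K V).coord i ⊗ₜ[K]
        ctr g (f ((Module.Basis.ofVectorSpace K V) i ⊗ₜ[K] x)) := by
  simp only [lp, LinearMap.coe_comp, Function.comp_apply, LinearEquiv.coe_coe,
    lid_symm_apply, LinearMap.rTensor_tmul, coevV_one, sum_tmul, map_sum,
    assoc_tmul, LinearMap.lTensor_tmul, assoc_symm_tmul, rid_ctr]

end Aux

set_option linter.unusedSectionVars false
set_option synthInstance.maxHeartbeats 1000000
set_option maxHeartbeats 4000000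

section Main

variable {ι : Type*} [Fintype ι] [DecidableEq ι]

/-- contraction formula for `ctr` applied to an expanded tensor -/
lemma ctr_expand (b : Module.Basis ι K V) (g : Module.Dual K V) (y : V ⊗[K] V) :
    ctr g y = ∑ k, ∑ m, (chi2 b k m y * g (b m)) • b k := by
  conv_lhs => rw [expand2 b y]
  simp only [map_sum, map_smul, ctr_tmul, smul_smul]

end Main

/-- let `ρ` be an invertible solution of the Yang–Baxter equation on a
finite-dimensional vector space `V` such that the partial transposes of `ρ` and `ρ⁻¹`
are invertible.  With `ρ± = l_p(ρ^{±1})`, the morphisms `η̄ = ρ₋⁻¹ ∘ coev` and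
`ε̄ = eval ∘ ρ₊⁻¹` satisfy the zig-zag identities, exhibiting `V*` as a two-sided dual
of `V`. -/
theorem statement11 (ρ ρ' : V ⊗[K] V →ₗ[K] V ⊗[K] V)
    (hρ : ρ ∘ₗ ρ' = LinearMap.id) (hρ' : ρ' ∘ₗ ρ = LinearMap.id)
    (ybe : Y1 ρ ∘ₗ Y2 ρ ∘ₗ Y1 ρ = Y2 ρ ∘ₗ Y1 ρ ∘ₗ Y2 ρ)
    (ρpi ρmi : Module.Dual K V ⊗[K] V →ₗ[K] V ⊗[K] Module.Dual K V)
    (hp1 : lp (K := K) ρ ∘ₗ ρpi = LinearMap.id)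
    (hp2 : ρpi ∘ₗ lp (K := K) ρ = LinearMap.id)
    (hm1 : lp (K := K) ρ' ∘ₗ ρmi = LinearMap.id)
    (hm2 : ρmi ∘ₗ lp (K := K) ρ' = LinearMap.id) :
    ∀ ηbar : K →ₗ[K] V ⊗[K] Module.Dual K V,
    ∀ εbar : Module.Dual K V ⊗[K] V →ₗ[K] K,
    ηbar = ρmi ∘ₗ coevV (K := K) (V := V) →
    εbar = contractRight K V ∘ₗ ρpi →
    ((TensorProduct.rid K V).toLinearMap ∘ₗ LinearMap.lTensor V εbar ∘ₗ
        (TensorProduct.assoc K V (Module.Dual K V) V).toLinearMap ∘ₗ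
          LinearMap.rTensor V ηbar ∘ₗ (TensorProduct.lid K V).symm.toLinearMap =
      LinearMap.id) ∧
    ((TensorProduct.lid K (Module.Dual K V)).toLinearMap ∘ₗ
        LinearMap.rTensor (Module.Dual K V) εbar ∘ₗ
          (TensorProduct.assoc K (Module.Dual K V) V
              (Module.Dual K V)).symm.toLinearMap ∘ₗ
            LinearMap.lTensor (Module.Dual K V) ηbar ∘ₗ
              (TensorProduct.rid K (Module.Dual K V)).symm.toLinearMap =
      LinearMap.id) := by
  classical
  intro ηbar εbar hη hε
  set b : Module.Basis (Module.Basis.ofVectorSpaceIndex K V) K V := Module.Basis.ofVectorSpace K V with hb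
  -- components
  set Af := fun (k m i j : Module.Basis.ofVectorSpaceIndex K V) => chi2 b k m (ρ (b i ⊗ₜ[K] b j))
    with hAf
  set Bf := fun (k m i j : Module.Basis.ofVectorSpaceIndex K V) => chi2 b k m (ρ' (b i ⊗ₜ[K] b j))
    with hBf
  set uc := fun (a c : Module.Basis.ofVectorSpaceIndex K V) => εbar (b.coord a ⊗ₜ[K] b c) with huc
  set hc := fun (j m : Module.Basis.ofVectorSpaceIndex K V) => chih b j m (ηbar 1) with hhc
  set Pc := fun (j m a c : Module.Basis.ofVectorSpaceIndex K V) => chih b j m (ρpi (b.coord a ⊗ₜ[K] b c))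
    with hPc
  -- expansion of ρ, ρ' on basis vectors
  have hexpA : ∀ i j, ρ (b i ⊗ₜ[K] b j) = ∑ k, ∑ m, Af k m i j • (b k ⊗ₜ[K] b m) :=
    fun i j => expand2 b _
  have hexpB : ∀ i j, ρ' (b i ⊗ₜ[K] b j) = ∑ k, ∑ m, Bf k m i j • (b k ⊗ₜ[K] b m) :=
    fun i j => expand2 b _
  have hexpP : ∀ a c, ρpi (b.coord a ⊗ₜ[K] b c)
      = ∑ j, ∑ m, Pc j m a c • (b j ⊗ₜ[K] b.coord m) :=
    fun a c => expandVD b _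
  have hexpH : ηbar 1 = ∑ j, ∑ m, hc j m • (b j ⊗ₜ[K] b.coord m) := expandVD b _
  -- lp applied to basis tensors, fully expanded
  have hlp : ∀ (f : V ⊗[K] V →ₗ[K] V ⊗[K] V)
      (F : Module.Basis.ofVectorSpaceIndex K V → Module.Basis.ofVectorSpaceIndex K V →
        Module.Basis.ofVectorSpaceIndex K V → Module.Basis.ofVectorSpaceIndex K V → K),
      (∀ i j, f (b i ⊗ₜ[K] b j) = ∑ k, ∑ m, F k m i j • (b k ⊗ₜ[K] b m)) →
      ∀ (j m : Module.Basis.ofVectorSpaceIndex K V), lp (K := K) f (b j ⊗ₜ[K] b.coord m)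
        = ∑ i, ∑ k, (F k m i j) • (b.coord i ⊗ₜ[K] b k) := by
    intro f F hF j m
    rw [lp_tmul, ← hb]
    refine Finset.sum_congr rfl fun i _ => ?_
    rw [hF i j]
    simp only [map_sum, map_smul, ctr_tmul, smul_smul, hco, tmul_sum, tmul_smul]
    refine Finset.sum_congr rfl fun k _ => ?_
    rw [← Finset.sum_smul, sum_mul_kd]
  -- folding helpers
  have hucv : ∀ a c, εbar (b.coord a ⊗ₜ[K] b c) = uc a c := fun _ _ => rfl
  have hhcv : ∀ j m, chih b j m (ηbar 1) = hc j m := fun _ _ => rfl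
  -- E1: ∑ i k, Af k m i j * uc i k = δ j m
  have hE1 : ∀ j m, (∑ i, ∑ k, Af k m i j * uc i k) = Kd j m := by
    intro j m
    have h0 : εbar (lp (K := K) ρ (b j ⊗ₜ[K] b.coord m)) = Kd j m := by
      rw [hε]
      have h2 := LinearMap.ext_iff.mp hp2 (b j ⊗ₜ[K] b.coord m)
      simp only [LinearMap.coe_comp, Function.comp_apply, LinearMap.id_coe, id_eq] at h2 ⊢
      rw [h2, contractRight_apply, hco]
    rw [hlp ρ Af hexpA j m] at h0
    simp only [map_sum, map_smul, smul_eq_mul, hucv] at h0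
    exact h0
  -- E2: ∑ j m, hc j m * Bf c m a j = δ a c
  have hE2 : ∀ a c, (∑ j, ∑ m, hc j m * Bf c m a j) = Kd a c := by
    intro a c
    have h0 : lp (K := K) ρ' (ηbar 1) = coevV (K := K) (V := V) 1 := by
      rw [hη]
      have h2 := LinearMap.ext_iff.mp hm1 (coevV (K := K) (V := V) 1)
      simp only [LinearMap.coe_comp, Function.comp_apply, LinearMap.id_coe, id_eq] at h2 ⊢
      exact h2
    rw [hexpH] at h0
    simp only [map_sum, map_smul] at h0
    have h1 := congrArg (chid b a c) h0
    rw [coevV_one, ← hb] at h1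
    simp only [map_sum, map_smul, smul_eq_mul, chid_tmul, hco] at h1
    have hL : ∀ j m, chid b a c ((lp (K := K) ρ') (b j ⊗ₜ[K] b.coord m)) = Bf c m a j := by
      intro j m
      rw [hlp ρ' Bf hexpB j m]
      simp only [map_sum, map_smul, chid_tmul, smul_eq_mul, hco]
      exact collapse2 (fun i k => Bf k m i j) a c
    simp only [hL] at h1
    rw [h1]
    exact sum_kd_mul' a _
  -- INV2 : ∑ j m, Pc j m a c * Af k m i j = δ i a * δ c k
  have hINV2 : ∀ a c i k, (∑ j, ∑ m, Pc j m a c * Af k m i j) = Kd i a * Kd c k := by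
    intro a c i k
    have h0 : lp (K := K) ρ (ρpi (b.coord a ⊗ₜ[K] b c)) = b.coord a ⊗ₜ[K] b c := by
      have h2 := LinearMap.ext_iff.mp hp1 (b.coord a ⊗ₜ[K] b c)
      simp only [LinearMap.coe_comp, Function.comp_apply, LinearMap.id_coe, id_eq] at h2
      exact h2
    rw [hexpP a c] at h0
    simp only [map_sum, map_smul] at h0
    have h1 := congrArg (chid b i k) h0
    simp only [map_sum, map_smul, smul_eq_mul, chid_tmul, hco] at h1
    have hL : ∀ j m, chid b i k ((lp (K := K) ρ) (b j ⊗ₜ[K] b.coord m)) = Af k m i j := by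
      intro j m
      rw [hlp ρ Af hexpA j m]
      simp only [map_sum, map_smul, chid_tmul, smul_eq_mul, hco]
      exact collapse2 (fun i' k' => Af k' m i' j) i k
    simp only [hL] at h1
    exact h1
  -- AB : ∑ β γ, Bf β γ j j'' * Af q m' β γ = δ j q * δ j'' m'
  have hAfv : ∀ k m i j, chi2 b k m (ρ (b i ⊗ₜ[K] b j)) = Af k m i j := fun _ _ _ _ => rfl
  have hBfv : ∀ k m i j, chi2 b k m (ρ' (b i ⊗ₜ[K] b j)) = Bf k m i j := fun _ _ _ _ => rfl
  have hAB : ∀ q m' j j'', (∑ β, ∑ γ, Bf β γ j j'' * Af q m' β γ) = Kd j q * Kd j'' m' := by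
    intro q m' j j''
    have h0 : ρ (ρ' (b j ⊗ₜ[K] b j'')) = b j ⊗ₜ[K] b j'' := by
      have h2 := LinearMap.ext_iff.mp hρ (b j ⊗ₜ[K] b j'')
      simp only [LinearMap.coe_comp, Function.comp_apply, LinearMap.id_coe, id_eq] at h2
      exact h2
    rw [hexpB j j''] at h0
    simp only [map_sum, map_smul] at h0
    have h1 := congrArg (chi2 b q m') h0
    simp only [map_sum, map_smul, smul_eq_mul, chi2_tmul, hco, hAfv] at h1
    exact h1
  -- u as trace of P
  have hu : ∀ a c, uc a c = ∑ j, Pc j j a c := by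
    intro a c
    rw [← hucv a c, hε]
    simp only [LinearMap.coe_comp, Function.comp_apply]
    rw [hexpP a c]
    simp only [map_sum, map_smul, contractRight_apply, smul_eq_mul]
    refine Finset.sum_congr rfl fun j _ => ?_
    simp only [hco]
    exact sum_mul_kd' j _
  -- operator-level mixed YBE
  have hY1Y1 : ∀ (f g : V ⊗[K] V →ₗ[K] V ⊗[K] V), f ∘ₗ g = LinearMap.id →
      ∀ z, Y1 (K := K) f (Y1 g z) = z := by
    intro f g hfg z
    rw [show Y1 (K := K) f (Y1 g z) = (LinearMap.rTensor V (f ∘ₗ g)) z from by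
      rw [LinearMap.rTensor_comp]; rfl]
    rw [hfg, LinearMap.rTensor_id]; rfl
  have hY2Y2 : ∀ (f g : V ⊗[K] V →ₗ[K] V ⊗[K] V), f ∘ₗ g = LinearMap.id →
      ∀ z, Y2 (K := K) f (Y2 g z) = z := by
    intro f g hfg z
    simp only [Y2, LinearMap.coe_comp, Function.comp_apply, LinearEquiv.coe_coe]
    rw [LinearEquiv.apply_symm_apply]
    rw [show (LinearMap.lTensor V f) ((LinearMap.lTensor V g) ((TensorProduct.assoc K V V V) z))
        = (LinearMap.lTensor V (f ∘ₗ g)) ((TensorProduct.assoc K V V V) z) from by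
          rw [LinearMap.lTensor_comp]; rfl]
    rw [hfg, LinearMap.lTensor_id]
    simp
  have ybe' : ∀ z, Y1 (K := K) ρ (Y2 ρ (Y1 ρ z)) = Y2 ρ (Y1 ρ (Y2 ρ z)) := by
    intro z
    have h2 := LinearMap.ext_iff.mp ybe z
    simpa only [LinearMap.coe_comp, Function.comp_apply] using h2
  have m2 : ∀ z, Y1 (K := K) ρ' (Y2 ρ (Y1 ρ z)) = Y2 ρ (Y1 ρ (Y2 ρ' z)) := by
    intro z
    conv_lhs => rw [show z = Y2 (K := K) ρ (Y2 ρ' z) from (hY2Y2 ρ ρ' hρ z).symm]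
    rw [← ybe' (Y2 ρ' z)]
    rw [hY1Y1 ρ' ρ hρ']
  -- elementwise Y1 Y2
  have hY1t : ∀ (f : V ⊗[K] V →ₗ[K] V ⊗[K] V) (y : V ⊗[K] V) (z : V),
      Y1 (K := K) f (y ⊗ₜ[K] z) = f y ⊗ₜ[K] z := by
    intro f y z; simp [Y1]
  have hY2t : ∀ (f : V ⊗[K] V →ₗ[K] V ⊗[K] V) (x y z : V),
      Y2 (K := K) f ((x ⊗ₜ[K] y) ⊗ₜ[K] z)
        = (TensorProduct.assoc K V V V).symm (x ⊗ₜ[K] f (y ⊗ₜ[K] z)) := by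
    intro f x y z; simp [Y2]
  -- left word expansion
  have hWL : ∀ (a j j'' p q m' : Module.Basis.ofVectorSpaceIndex K V),
      chi3 b p q m' (Y1 (K := K) ρ' (Y2 ρ (Y1 ρ ((b a ⊗ₜ[K] b j) ⊗ₜ[K] b j''))))
        = ∑ k, ∑ m, ∑ l, Af k m a j * (Af l m' m j'' * Bf p q k l) := by
    intro a j j'' p q m'
    have step3 : ∀ (k l m'' : Module.Basis.ofVectorSpaceIndex K V),
        chi3 b p q m' (Y1 (K := K) ρ' ((b k ⊗ₜ[K] b l) ⊗ₜ[K] b m''))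
          = ∑ p', ∑ q', Bf p' q' k l * ((Kd p' p * Kd q' q) * Kd m'' m') := by
      intro k l m''
      rw [hY1t, hexpB k l, sum_tmul]
      simp only [← smul_tmul', sum_tmul, map_sum, map_smul, smul_eq_mul, chi3_tmul,
        chi2_tmul, hco]
    have step2 : ∀ (k m : Module.Basis.ofVectorSpaceIndex K V),
        chi3 b p q m' (Y1 (K := K) ρ' (Y2 ρ ((b k ⊗ₜ[K] b m) ⊗ₜ[K] b j'')))
          = ∑ l, Af l m' m j'' * Bf p q k l := by
      intro k m
      rw [hY2t, hexpA m j'']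
      simp only [tmul_sum, tmul_smul, map_sum, map_smul, assoc_symm_tmul, smul_eq_mul]
      simp only [step3]
      exact Finset.sum_congr rfl fun l _ =>
        collapse5 (fun m'' => Af l m'' m j'') (fun p' q' => Bf p' q' k l) p q m'
    rw [hY1t, hexpA a j, sum_tmul]
    simp only [← smul_tmul', sum_tmul, map_sum, map_smul, smul_eq_mul]
    simp only [step2]
    exact Finset.sum_congr rfl fun k _ => Finset.sum_congr rfl fun m _ => Finset.mul_sum _ _ _
  -- right word expansion
  have hWR : ∀ (a j j'' p q m' : Module.Basis.ofVectorSpaceIndex K V),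
      chi3 b p q m' (Y2 (K := K) ρ (Y1 ρ (Y2 ρ' ((b a ⊗ₜ[K] b j) ⊗ₜ[K] b j''))))
        = ∑ β, ∑ γ, ∑ μ, Bf β γ j j'' * (Af p μ a β * Af q m' μ γ) := by
    intro a j j'' p q m'
    have step3 : ∀ (p' μ γ : Module.Basis.ofVectorSpaceIndex K V),
        chi3 b p q m' (Y2 (K := K) ρ ((b p' ⊗ₜ[K] b μ) ⊗ₜ[K] b γ))
          = ∑ q', ∑ m'', Af q' m'' μ γ * ((Kd p' p * Kd q' q) * Kd m'' m') := by
      intro p' μ γ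
      rw [hY2t, hexpA μ γ]
      simp only [tmul_sum, tmul_smul, map_sum, map_smul, assoc_symm_tmul, smul_eq_mul,
        chi3_tmul, chi2_tmul, hco]
    have step2 : ∀ (β γ : Module.Basis.ofVectorSpaceIndex K V),
        chi3 b p q m' (Y2 (K := K) ρ (Y1 ρ ((b a ⊗ₜ[K] b β) ⊗ₜ[K] b γ)))
          = ∑ μ, Af p μ a β * Af q m' μ γ := by
      intro β γ
      rw [hY1t, hexpA a β, sum_tmul]
      simp only [← smul_tmul', sum_tmul, map_sum, map_smul, smul_eq_mul]
      simp only [step3]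
      calc (∑ p', ∑ μ, Af p' μ a β *
              (∑ q', ∑ m'', Af q' m'' μ γ * ((Kd p' p * Kd q' q) * Kd m'' m')))
          = ∑ p', ∑ μ, Af p' μ a β * (Kd p' p * Af q m' μ γ) := by
            refine Finset.sum_congr rfl fun p' _ => Finset.sum_congr rfl fun μ _ => ?_
            rw [collapse6 (fun q' m'' => Af q' m'' μ γ) q m' (Kd p' p)]
        _ = ∑ μ, Af p μ a β * Af q m' μ γ :=
            collapse7 (fun p' μ => Af p' μ a β) (fun μ => Af q m' μ γ) p
    rw [hY2t, hexpB j j'']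
    simp only [tmul_sum, tmul_smul, map_sum, map_smul, assoc_symm_tmul, smul_eq_mul]
    simp only [step2]
    exact Finset.sum_congr rfl fun β _ => Finset.sum_congr rfl fun γ _ => Finset.mul_sum _ _ _
  -- C0
  have hC0 : ∀ (j j'' q m' : Module.Basis.ofVectorSpaceIndex K V),
      (∑ a, ∑ p, uc a p * (∑ k, ∑ m, ∑ l, Af k m a j * (Af l m' m j'' * Bf p q k l)))
        = Kd j q * Kd j'' m' := by
    intro j j'' q m'
    calc (∑ a, ∑ p, uc a p * (∑ k, ∑ m, ∑ l, Af k m a j * (Af l m' m j'' * Bf p q k l)))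
        = ∑ a, ∑ p, uc a p * (∑ β, ∑ γ, ∑ μ, Bf β γ j j'' * (Af p μ a β * Af q m' μ γ)) := by
          refine Finset.sum_congr rfl fun a _ => Finset.sum_congr rfl fun p _ => ?_
          rw [← hWL a j j'' p q m', ← hWR a j j'' p q m', m2]
      _ = ∑ a, ∑ p, ∑ β, ∑ γ, ∑ μ,
            uc a p * (Bf β γ j j'' * (Af p μ a β * Af q m' μ γ)) := by
          refine Finset.sum_congr rfl fun a _ => Finset.sum_congr rfl fun p _ => ?_
          simp only [Finset.mul_sum]
      _ = ∑ β, ∑ γ, ∑ μ, ∑ a, ∑ p,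
            uc a p * (Bf β γ j j'' * (Af p μ a β * Af q m' μ γ)) :=
          rot2_3 (fun a p β γ μ => uc a p * (Bf β γ j j'' * (Af p μ a β * Af q m' μ γ)))
      _ = ∑ β, ∑ γ, ∑ μ, (Bf β γ j j'' * Af q m' μ γ) * (∑ a, ∑ p, Af p μ a β * uc a p) := by
          refine Finset.sum_congr rfl fun β _ => Finset.sum_congr rfl fun γ _ =>
            Finset.sum_congr rfl fun μ _ => ?_
          rw [Finset.mul_sum]
          refine Finset.sum_congr rfl fun a _ => ?_
          rw [Finset.mul_sum]
          exact Finset.sum_congr rfl fun p _ => by ring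
      _ = ∑ β, ∑ γ, ∑ μ, (Bf β γ j j'' * Af q m' μ γ) * Kd β μ := by
          refine Finset.sum_congr rfl fun β _ => Finset.sum_congr rfl fun γ _ =>
            Finset.sum_congr rfl fun μ _ => ?_
          rw [hE1 β μ]
      _ = ∑ β, ∑ γ, Bf β γ j j'' * Af q m' β γ := by
          refine Finset.sum_congr rfl fun β _ => ?_
          rw [Finset.sum_comm]
          refine ?_
          calc (∑ μ, ∑ γ, (Bf β γ j j'' * Af q m' μ γ) * Kd β μ)
              = ∑ μ, (∑ γ, Bf β γ j j'' * Af q m' μ γ) * Kd β μ := by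
                refine Finset.sum_congr rfl fun μ _ => ?_
                rw [Finset.sum_mul]
            _ = ∑ γ, Bf β γ j j'' * Af q m' β γ := sum_mul_kd' β _
      _ = Kd j q * Kd j'' m' := hAB q m' j j''
  -- C1 : the key YBE consequence
  have hS : ∀ (q m j l : Module.Basis.ofVectorSpaceIndex K V),
      (∑ a, ∑ p, ∑ k, uc a p * (Bf p q k l * Af k m a j)) = Kd j q * uc m l := by
    intro q m j l
    have key : ∀ j'' mm, (∑ a, ∑ p, ∑ k, ∑ m', ∑ l',
        uc a p * (Bf p q k l' * Af k m' a j) * (Pc j'' mm m l * Af l' mm m' j''))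
        = Pc j'' mm m l * (∑ a, ∑ p, uc a p *
            (∑ k, ∑ m', ∑ l', Af k m' a j * (Af l' mm m' j'' * Bf p q k l'))) := by
      intro j'' mm
      conv_rhs => rw [Finset.mul_sum]
      refine Finset.sum_congr rfl fun a _ => ?_
      conv_rhs => rw [Finset.mul_sum]
      refine Finset.sum_congr rfl fun p _ => ?_
      conv_rhs => simp only [Finset.mul_sum]
      refine Finset.sum_congr rfl fun k _ => Finset.sum_congr rfl fun m' _ =>
        Finset.sum_congr rfl fun l' _ => by ring
    calc (∑ a, ∑ p, ∑ k, uc a p * (Bf p q k l * Af k m a j))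
        = ∑ a, ∑ p, ∑ k, ∑ m', ∑ l',
            uc a p * (Bf p q k l' * Af k m' a j) * (Kd m' m * Kd l l') := by
          refine Finset.sum_congr rfl fun a _ => Finset.sum_congr rfl fun p _ =>
            Finset.sum_congr rfl fun k _ => ?_
          exact (collapse2' (fun m' l' => uc a p * (Bf p q k l' * Af k m' a j)) m l).symm
      _ = ∑ a, ∑ p, ∑ k, ∑ m', ∑ l', uc a p * (Bf p q k l' * Af k m' a j) *
            (∑ j'', ∑ mm, Pc j'' mm m l * Af l' mm m' j'') := by
          refine Finset.sum_congr rfl fun a _ => Finset.sum_congr rfl fun p _ =>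
            Finset.sum_congr rfl fun k _ => Finset.sum_congr rfl fun m' _ =>
            Finset.sum_congr rfl fun l' _ => ?_
          rw [hINV2 m l m' l']
      _ = ∑ a, ∑ p, ∑ k, ∑ m', ∑ l', ∑ j'', ∑ mm,
            uc a p * (Bf p q k l' * Af k m' a j) * (Pc j'' mm m l * Af l' mm m' j'') := by
          refine Finset.sum_congr rfl fun a _ => Finset.sum_congr rfl fun p _ =>
            Finset.sum_congr rfl fun k _ => Finset.sum_congr rfl fun m' _ =>
            Finset.sum_congr rfl fun l' _ => ?_
          simp only [Finset.mul_sum]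
      _ = ∑ j'', ∑ mm, ∑ a, ∑ p, ∑ k, ∑ m', ∑ l',
            uc a p * (Bf p q k l' * Af k m' a j) * (Pc j'' mm m l * Af l' mm m' j'') := by
          rw [show (∑ a, ∑ p, ∑ k, ∑ m', ∑ l', ∑ j'', ∑ mm,
              uc a p * (Bf p q k l' * Af k m' a j) * (Pc j'' mm m l * Af l' mm m' j''))
            = ∑ a, ∑ p, ∑ k, ∑ m', ∑ l', ∑ j'', ∑ mm,
              (fun j'' mm a p k m' l' => uc a p * (Bf p q k l' * Af k m' a j) *
                (Pc j'' mm m l * Af l' mm m' j'')) j'' mm a p k m' l' from rfl]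
          exact (rot2_5 _).symm
      _ = ∑ j'', ∑ mm, Pc j'' mm m l * (∑ a, ∑ p, uc a p *
            (∑ k, ∑ m', ∑ l', Af k m' a j * (Af l' mm m' j'' * Bf p q k l'))) := by
          refine Finset.sum_congr rfl fun j'' _ => Finset.sum_congr rfl fun mm _ => ?_
          exact key j'' mm
      _ = ∑ j'', ∑ mm, Pc j'' mm m l * (Kd j q * Kd j'' mm) := by
          refine Finset.sum_congr rfl fun j'' _ => Finset.sum_congr rfl fun mm _ => ?_
          rw [hC0 j j'' q mm]
      _ = Kd j q * uc m l := by
          have hrow : ∀ j'', (∑ mm, Pc j'' mm m l * (Kd j q * Kd j'' mm))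
              = Kd j q * Pc j'' j'' m l := by
            intro j''
            calc (∑ mm, Pc j'' mm m l * (Kd j q * Kd j'' mm))
                = Kd j q * ∑ mm, Pc j'' mm m l * Kd j'' mm := by
                  rw [Finset.mul_sum]
                  exact Finset.sum_congr rfl fun mm _ => by ring
              _ = Kd j q * Pc j'' j'' m l := by rw [sum_mul_kd' j'']
          simp only [hrow]
          rw [← Finset.mul_sum, hu m l]
  -- u * h = 1
  have hUH : ∀ (m j : Module.Basis.ofVectorSpaceIndex K V),
      (∑ l, uc m l * hc l j) = Kd m j := by
    intro m j
    calc (∑ l, uc m l * hc l j)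
        = ∑ l, ∑ q, (Kd j q * uc m l) * hc l q := by
          refine Finset.sum_congr rfl fun l _ => ?_
          rw [show (∑ q, (Kd j q * uc m l) * hc l q)
              = ∑ q, Kd j q * (uc m l * hc l q) from
            Finset.sum_congr rfl fun q _ => by ring]
          rw [sum_kd_mul' j]
      _ = ∑ l, ∑ q, (∑ a, ∑ p, ∑ k, uc a p * (Bf p q k l * Af k m a j)) * hc l q := by
          refine Finset.sum_congr rfl fun l _ => Finset.sum_congr rfl fun q _ => ?_
          rw [hS q m j l]
      _ = ∑ l, ∑ q, ∑ a, ∑ p, ∑ k, (uc a p * (Bf p q k l * Af k m a j)) * hc l q := by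
          refine Finset.sum_congr rfl fun l _ => Finset.sum_congr rfl fun q _ => ?_
          simp only [Finset.sum_mul]
      _ = ∑ a, ∑ p, ∑ k, ∑ l, ∑ q, (uc a p * (Bf p q k l * Af k m a j)) * hc l q :=
          rot2_3 (fun l q a p k => (uc a p * (Bf p q k l * Af k m a j)) * hc l q)
      _ = ∑ a, ∑ p, ∑ k, (uc a p * Af k m a j) * (∑ l, ∑ q, hc l q * Bf p q k l) := by
          refine Finset.sum_congr rfl fun a _ => Finset.sum_congr rfl fun p _ =>
            Finset.sum_congr rfl fun k _ => ?_
          rw [Finset.mul_sum]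
          refine Finset.sum_congr rfl fun l _ => ?_
          rw [Finset.mul_sum]
          exact Finset.sum_congr rfl fun q _ => by ring
      _ = ∑ a, ∑ p, ∑ k, (uc a p * Af k m a j) * Kd k p := by
          refine Finset.sum_congr rfl fun a _ => Finset.sum_congr rfl fun p _ =>
            Finset.sum_congr rfl fun k _ => ?_
          rw [hE2 k p]
      _ = ∑ a, ∑ k, Af k m a j * uc a k := by
          refine Finset.sum_congr rfl fun a _ => ?_
          rw [Finset.sum_comm]
          refine Finset.sum_congr rfl fun k _ => ?_
          rw [show (∑ p, (uc a p * Af k m a j) * Kd k p)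
              = ∑ p, (Af k m a j * uc a p) * Kd k p from
            Finset.sum_congr rfl fun p _ => by ring]
          rw [sum_mul_kd' k]
      _ = Kd j m := hE1 j m
      _ = Kd m j := kd_comm j m
  -- matrix commutation : h * u = 1
  have hHU : ∀ (j c : Module.Basis.ofVectorSpaceIndex K V),
      (∑ mm, hc j mm * uc mm c) = Kd j c := by
    have hM : (Matrix.of uc) * (Matrix.of hc) = 1 := by
      ext m j
      rw [Matrix.mul_apply]
      rw [show (∑ l, Matrix.of uc m l * Matrix.of hc l j) = ∑ l, uc m l * hc l j from rfl]
      rw [hUH m j]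
      simp [Matrix.one_apply, Kd]
    have hM2 := mul_eq_one_comm.mp hM
    intro j c
    have h3 : ((Matrix.of hc) * (Matrix.of uc)) j c = (1 : Matrix _ _ K) j c := by
      rw [hM2]
    rw [Matrix.mul_apply] at h3
    rw [show (∑ mm, hc j mm * uc mm c)
        = ∑ mm, Matrix.of hc j mm * Matrix.of uc mm c from rfl]
    rw [h3]
    simp [Matrix.one_apply, Kd]
  -- the two zig-zag identities
  constructor
  · refine b.ext fun c => ?_
    simp only [LinearMap.coe_comp, Function.comp_apply, LinearEquiv.coe_coe,
      lid_symm_apply, LinearMap.rTensor_tmul, LinearMap.id_coe, id_eq]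
    rw [hexpH]
    simp only [sum_tmul, ← smul_tmul', map_sum, map_smul, assoc_tmul,
      LinearMap.lTensor_tmul, rid_tmul, hucv, smul_smul]
    rw [show (∑ j, ∑ mm, (hc j mm * uc mm c) • b j)
        = ∑ j, (Kd j c : K) • b j from
      Finset.sum_congr rfl fun j _ => by rw [← Finset.sum_smul, hHU j c]]
    exact sum_kd_smul c _
  · refine b.dualBasis.ext fun a => ?_
    simp only [Module.Basis.coe_dualBasis]
    simp only [LinearMap.coe_comp, Function.comp_apply, LinearEquiv.coe_coe,
      rid_symm_apply, LinearMap.lTensor_tmul, LinearMap.id_coe, id_eq]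
    rw [hexpH]
    simp only [tmul_sum, tmul_smul, map_sum, map_smul, assoc_symm_tmul,
      LinearMap.rTensor_tmul, lid_tmul, hucv, smul_smul]
    rw [Finset.sum_comm]
    rw [show (∑ mm, ∑ j, (hc j mm * uc a j) • b.coord mm)
        = ∑ mm, (Kd a mm : K) • b.coord mm from
      Finset.sum_congr rfl fun mm _ => by
        rw [← Finset.sum_smul,
          show (∑ j, hc j mm * uc a j) = ∑ j, uc a j * hc j mm from
            Finset.sum_congr rfl fun j _ => by ring,
          hUH a mm]]
    exact sum_kd_smul' a _

end Stmt11
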